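/- Let X, Y, Z be nonempty words over the alphabet {L, M, R} with |X| = |Z| < |Y|, satisfying XY = ȲZ. Write |Y| = q·|X| + r with 0 ≤ r < |X|. If q is even, then there exist words Y₀ of length r and X₀ such that X̄ = Y₀X₀, Z = X̄₀Y₀, and Y = (Y₀X₀·(Y₀X₀)‾)^{q/2} Y₀; in particular Y is a broken alternating word. -/

import Mathlib

/-- The three-letter alphabet {L, M, R}. -/
inductive Letter : Type
  | L | M | R
deriving DecidableEq, Repr

/-- Complementation on letters: R̄ = L, L̄ = R, M̄ = M. -/
def Letter.bar : Letter → Letter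
  | .L => .R
  | .M => .M
  | .R => .L

/-- Complement of a word (letterwise). -/
def comp (w : List Letter) : List Letter := w.map Letter.bar

/-- k-fold concatenation of a word with itself. -/
def npow (w : List Letter) : ℕ → List Letter
  | 0 => []
  | n + 1 => w ++ npow w n

/-- A broken alternating word: w = (w₁ w̄₁)^n w₀ with n ≥ 1 and w₀ a prefix of w₁ w̄₁. -/
def BrokenAlternating (w : List Letter) : Prop :=
  ∃ (w₁ w₀ : List Letter) (n : ℕ), 0 < n ∧ w₀ <+: (w₁ ++ comp w₁) ∧
    w = npow (w₁ ++ comp w₁) n ++ w₀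

lemma Letter.bar_bar (a : Letter) : a.bar.bar = a := by cases a <;> rfl

lemma comp_comp (w : List Letter) : comp (comp w) = w := by
  simp [comp, List.map_map, Function.comp_def, Letter.bar_bar]

lemma comp_append (a b : List Letter) : comp (a ++ b) = comp a ++ comp b :=
  List.map_append

lemma comp_length (w : List Letter) : (comp w).length = w.length :=
  List.length_map _

lemma comp_take (n : ℕ) (w : List Letter) : comp (w.take n) = (comp w).take n :=
  (List.map_take)

lemma comp_drop (n : ℕ) (w : List Letter) : comp (w.drop n) = (comp w).drop n :=
  (List.map_drop)

lemma helper (r : ℕ) (m : ℕ) : ∀ (X Y Z : List Letter), X.length = Z.length →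
    r < X.length → Y.length = 2 * m * X.length + r → X ++ Y = comp Y ++ Z →
    Y = npow (comp X ++ X) m ++ (comp X).take r ∧ Z = X.drop r ++ (comp X).take r := by
  induction m with
  | zero =>
    intro X Y Z hXZ hr hlen heq
    simp only [Nat.mul_zero, Nat.zero_mul, Nat.zero_add] at hlen
    have hsplit : X.take r ++ (X.drop r ++ Y) = comp Y ++ Z := by
      rw [← List.append_assoc, List.take_append_drop]; exact heq
    have hl : (X.take r).length = (comp Y).length := by
      rw [List.length_take, comp_length, hlen]; omega
    obtain ⟨h1, h2⟩ := List.append_inj hsplit hl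
    have hY : Y = (comp X).take r := by
      rw [← comp_take, h1, comp_comp]
    constructor
    · rw [show npow (comp X ++ X) 0 = [] from rfl, List.nil_append]; exact hY
    · rw [← h2, hY]
  | succ m ih =>
    intro X Y Z hXZ hr hlen heq
    have hXpos : 0 < X.length := by omega
    -- peel A = Y.take |X|
    set A := Y.take X.length with hA
    set B := Y.drop X.length with hB
    have hYAB : Y = A ++ B := (List.take_append_drop _ _).symm
    have hh0 : 2 * (m + 1) * X.length = 2 * m * X.length + 2 * X.length := by ring
    have hAlen : A.length = X.length := by
      rw [hA, List.length_take]; omega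
    have heq1 : X ++ (A ++ B) = comp A ++ (comp B ++ Z) := by
      rw [← hYAB, ← List.append_assoc, ← comp_append, ← hYAB]; exact heq
    have hl1 : X.length = (comp A).length := by rw [comp_length, hAlen]
    obtain ⟨hXA, heq2⟩ := List.append_inj heq1 hl1
    have hAX : A = comp X := by rw [hXA, comp_comp]
    -- peel C = B.take |X|
    set C := B.take X.length with hC
    set D := B.drop X.length with hD
    have hBlen : B.length = 2 * m * X.length + X.length + r := by
      rw [hB, List.length_drop, hlen]
      have hh : 2 * (m + 1) * X.length = 2 * m * X.length + 2 * X.length := by ring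
      omega
    have hBCD : B = C ++ D := (List.take_append_drop _ _).symm
    have hClen : C.length = X.length := by
      rw [hC, List.length_take]; omega
    have heq3 : A ++ (C ++ D) = comp C ++ (comp D ++ Z) := by
      rw [← hBCD, ← List.append_assoc, ← comp_append, ← hBCD]; exact heq2
    have hl2 : A.length = (comp C).length := by rw [comp_length, hClen, hAlen]
    obtain ⟨hAC, heq4⟩ := List.append_inj heq3 hl2
    have hCX : C = X := by
      have := congrArg comp hAC
      rw [hAX, comp_comp, comp_comp] at this; exact this.symm
    have hDlen : D.length = 2 * m * X.length + r := by
      rw [hD, List.length_drop, hBlen]; omega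
    have heq5 : X ++ D = comp D ++ Z := by rw [← hCX]; exact heq4
    obtain ⟨ihY, ihZ⟩ := ih X D Z hXZ hr hDlen heq5
    refine ⟨?_, ihZ⟩
    rw [hYAB, hBCD, hAX, hCX, ihY,
      show npow (comp X ++ X) (m + 1) = (comp X ++ X) ++ npow (comp X ++ X) m from rfl]
    simp [List.append_assoc]

theorem stmt_8 (X Y Z : List Letter) (hX : X ≠ []) (hY : Y ≠ []) (hZ : Z ≠ [])
    (hXZ : X.length = Z.length) (hXY : X.length < Y.length)
    (heq : X ++ Y = comp Y ++ Z)
    (q r : ℕ) (hqr : Y.length = q * X.length + r) (hrlt : r < X.length)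
    (hq : Even q) :
    ∃ (Y₀ X₀ : List Letter), Y₀.length = r ∧
      comp X = Y₀ ++ X₀ ∧
      Z = comp X₀ ++ Y₀ ∧
      Y = npow ((Y₀ ++ X₀) ++ comp (Y₀ ++ X₀)) (q / 2) ++ Y₀ ∧
      BrokenAlternating Y := by
  obtain ⟨k, hk⟩ := hq
  have hq2 : q = 2 * k := by omega
  have hdiv : q / 2 = k := by omega
  have hlen : Y.length = 2 * k * X.length + r := by rw [hqr, hq2]
  obtain ⟨hYeq, hZeq⟩ := helper r k X Y Z hXZ hrlt hlen heq
  have hkpos : 0 < k := by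
    rcases Nat.eq_zero_or_pos k with h | h
    · subst h; simp [npow] at hYeq
      have : Y.length = ((comp X).take r).length := by rw [hYeq]
      rw [List.length_take, comp_length] at this
      omega
    · exact h
  refine ⟨(comp X).take r, (comp X).drop r, ?_, ?_, ?_, ?_, ?_⟩
  · rw [List.length_take, comp_length]; omega
  · exact (List.take_append_drop _ _).symm
  · rw [hZeq, ← comp_drop, comp_comp]
  · rw [List.take_append_drop, comp_comp, hdiv]; exact hYeq
  · exact ⟨comp X, (comp X).take r, k, hkpos,
      (List.take_prefix _ _).trans (List.prefix_append _ _),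
      by rw [comp_comp]; exact hYeq⟩
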